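/- For every nonzero complex number t, every complex number z and every integer n ≥ 1: ∑_{k∈ℤ} t^{kn} I_{kn}(z) = (1/n) ∑_{j=0}^{n−1} exp( (z/2)( t^{−1} e^{2πij/n} + t e^{−2πij/n} ) ). -/

import Mathlib

open Real Filter MeasureTheory

/-- Modified Bessel function of the first kind of integer order `m` and complex argument,
`I_m(z) = ∑_{j=0}^∞ (z/2)^{2j+|m|} / (j! (j+|m|)!)`. -/
noncomputable def besselIC (m : ℤ) (z : ℂ) : ℂ :=
  ∑' j : ℕ, (z / 2) ^ (2 * j + m.natAbs) /
    ((Nat.factorial j : ℂ) * (Nat.factorial (j + m.natAbs) : ℂ))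

private lemma exp_tsum' (w : ℂ) : Complex.exp w = ∑' p : ℕ, w ^ p / (Nat.factorial p : ℂ) := by
  rw [Complex.exp_eq_exp_ℂ, NormedSpace.exp_eq_tsum_div]

private lemma summable_norm_exp' (w : ℂ) :
    Summable (fun p : ℕ => ‖w ^ p / (Nat.factorial p : ℂ)‖) := by
  simpa [norm_pow] using Real.summable_pow_div_factorial ‖w‖

private def eZN : ℤ × ℕ ≃ ℕ × ℕ where
  toFun kj := (kj.2 + kj.1.toNat, kj.2 + (-kj.1).toNat)
  invFun pq := ((pq.1 : ℤ) - pq.2, min pq.1 pq.2)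
  left_inv kj := by obtain ⟨k, j⟩ := kj; simp only [Prod.mk.injEq]; constructor <;> omega
  right_inv pq := by obtain ⟨p, q⟩ := pq; simp only [Prod.mk.injEq]; constructor <;> omega

/-- Generating function of the modified Bessel functions. -/
private lemma bessel_generating (z s : ℂ) (hs : s ≠ 0) :
    HasSum (fun k : ℤ => s ^ k * besselIC k z)
      (Complex.exp (z / 2 * (s + s⁻¹))) := by
  set a : ℂ := z / 2 with ha
  set f : ℕ → ℂ := fun p => (a * s) ^ p / (Nat.factorial p : ℂ) with hf'
  set g : ℕ → ℂ := fun q => (a * s⁻¹) ^ q / (Nat.factorial q : ℂ) with hg'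
  set F : ℕ × ℕ → ℂ := fun pq => f pq.1 * g pq.2 with hF'
  have hfn := summable_norm_exp' (a * s)
  have hgn := summable_norm_exp' (a * s⁻¹)
  have hF : Summable F := summable_mul_of_summable_norm hfn hgn
  have hG : Summable (F ∘ eZN) := (eZN.summable_iff).2 hF
  -- value of the full sum
  have hExp : Complex.exp (z / 2 * (s + s⁻¹)) = ∑' pq : ℕ × ℕ, F pq := by
    rw [mul_add, Complex.exp_add, exp_tsum' (z / 2 * s), exp_tsum' (z / 2 * s⁻¹)]
    exact tsum_mul_tsum_of_summable_norm hfn hgn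
  -- the fiber computation
  have hfib : ∀ k : ℤ, ∀ j : ℕ,
      F (eZN (k, j)) = s ^ k *
        (a ^ (2 * j + k.natAbs) /
          ((Nat.factorial j : ℂ) * (Nat.factorial (j + k.natAbs) : ℂ))) := by
    intro k j
    have hfac : ((Nat.factorial (j + k.toNat) : ℂ)) * (Nat.factorial (j + (-k).toNat) : ℂ)
        = (Nat.factorial j : ℂ) * (Nat.factorial (j + k.natAbs) : ℂ) := by
      rcases le_or_gt 0 k with h | h
      · rw [show (-k).toNat = 0 by omega, show k.toNat = k.natAbs by omega]
        ring
      · rw [show k.toNat = 0 by omega, show (-k).toNat = k.natAbs by omega]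
        ring
    have hsp : s ^ (j + k.toNat) * (s⁻¹) ^ (j + (-k).toNat) = s ^ (k : ℤ) := by
      rw [inv_pow, ← zpow_natCast s (j + k.toNat), ← zpow_natCast s (j + (-k).toNat),
        ← zpow_neg, ← zpow_add₀ hs]
      congr 1; omega
    have hap : a ^ (j + k.toNat) * a ^ (j + (-k).toNat) = a ^ (2 * j + k.natAbs) := by
      rw [← pow_add]; congr 1; omega
    show (a * s) ^ (j + k.toNat) / (Nat.factorial (j + k.toNat) : ℂ) *
        ((a * s⁻¹) ^ (j + (-k).toNat) / (Nat.factorial (j + (-k).toNat) : ℂ)) = _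
    rw [mul_pow, mul_pow, div_mul_div_comm, hfac]
    rw [show a ^ (j + k.toNat) * s ^ (j + k.toNat) * (a ^ (j + (-k).toNat) * (s⁻¹) ^ (j + (-k).toNat))
        = (a ^ (j + k.toNat) * a ^ (j + (-k).toNat)) * (s ^ (j + k.toNat) * (s⁻¹) ^ (j + (-k).toNat))
      by ring, hsp, hap, mul_comm (a ^ (2 * j + k.natAbs)) (s ^ (k : ℤ)), mul_div_assoc]
  -- fiberwise HasSum
  have hfibsum : ∀ k : ℤ,
      HasSum (fun j : ℕ => F (eZN (k, j))) (s ^ k * besselIC k z) := by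
    intro k
    have h1 : Summable fun j : ℕ => F (eZN (k, j)) := hG.prod_factor k
    have h2 : Summable fun j : ℕ =>
        a ^ (2 * j + k.natAbs) /
          ((Nat.factorial j : ℂ) * (Nat.factorial (j + k.natAbs) : ℂ)) := by
      have := h1.mul_left ((s : ℂ) ^ (k : ℤ))⁻¹
      refine this.congr fun j => ?_
      rw [hfib k j, ← mul_assoc, inv_mul_cancel₀ (zpow_ne_zero _ hs), one_mul]
    have h3 : HasSum (fun j : ℕ =>
        a ^ (2 * j + k.natAbs) /
          ((Nat.factorial j : ℂ) * (Nat.factorial (j + k.natAbs) : ℂ))) (besselIC k z) :=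
      h2.hasSum
    exact (h3.mul_left (s ^ k)).congr_fun (hfib k)
  have hGsum : HasSum (F ∘ eZN) (Complex.exp (z / 2 * (s + s⁻¹))) := by
    have := hG.hasSum
    rwa [show ∑' kj : ℤ × ℕ, (F ∘ eZN) kj = Complex.exp (z / 2 * (s + s⁻¹)) by
      rw [hExp]; exact eZN.tsum_eq F] at this
  exact hGsum.prod_fiberwise hfibsum

private lemma roots_filter (n : ℕ) (hn : 1 ≤ n) (k : ℤ) :
    ∑ j ∈ Finset.range n, Complex.exp ((k : ℂ) * (-(2 * (π : ℂ) * Complex.I * (j : ℂ)) / n))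
      = if (n : ℤ) ∣ k then (n : ℂ) else 0 := by
  have hn0 : (n : ℂ) ≠ 0 := Nat.cast_ne_zero.2 (by omega)
  set ζ : ℂ := Complex.exp (-(2 * (π : ℂ) * Complex.I) * k / n) with hζ
  have hterm : ∀ j ∈ Finset.range n,
      Complex.exp ((k : ℂ) * (-(2 * (π : ℂ) * Complex.I * (j : ℂ)) / n)) = ζ ^ j := by
    intro j _
    rw [hζ, ← Complex.exp_nat_mul]
    congr 1; ring
  rw [Finset.sum_congr rfl hterm]
  by_cases hdvd : (n : ℤ) ∣ k
  · obtain ⟨m, rfl⟩ := hdvd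
    have hζ1 : ζ = 1 := by
      rw [hζ, show -(2 * (π : ℂ) * Complex.I) * ((n : ℤ) * m : ℤ) / n
          = (-m : ℤ) * (2 * π * Complex.I) by push_cast; field_simp]
      exact Complex.exp_int_mul_two_pi_mul_I (-m)
    simp [hζ1]
  · have hζ1 : ζ ≠ 1 := by
      intro h
      rw [hζ, Complex.exp_eq_one_iff] at h
      obtain ⟨m, hm⟩ := h
      have h2 : (2 * (π : ℂ) * Complex.I) ≠ 0 := by
        simp [Real.pi_ne_zero, Complex.I_ne_zero, Complex.ofReal_ne_zero]
      refine hdvd ⟨-m, ?_⟩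
      have hc : (k : ℂ) = ((n * -m : ℤ) : ℂ) := by
        have := mul_right_cancel₀ h2 (show (-k : ℂ) * (2 * (π : ℂ) * Complex.I)
            = ((m : ℂ) * n) * (2 * (π : ℂ) * Complex.I) by
          field_simp at hm; linear_combination (2 * (π : ℂ) * Complex.I) * hm)
        push_cast
        linear_combination -this
      exact_mod_cast hc
    have hζn : ζ ^ n = 1 := by
      rw [hζ, ← Complex.exp_nat_mul,
        show (n : ℂ) * (-(2 * (π : ℂ) * Complex.I) * k / n) = (-k : ℤ) * (2 * π * Complex.I) by
          push_cast; field_simp]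
      exact Complex.exp_int_mul_two_pi_mul_I (-k)
    rw [geom_sum_eq hζ1, hζn]
    simp [hdvd]

/-- `∑_{k∈ℤ} t^{kn} I_{kn}(z) = (1/n) ∑_{j=0}^{n−1} exp((z/2)(t⁻¹ e^{2πij/n} + t e^{−2πij/n}))`. -/
theorem bessel_sum_roots_of_unity
    (t : ℂ) (ht : t ≠ 0) (z : ℂ) (n : ℕ) (hn : 1 ≤ n) :
    ∑' k : ℤ, t ^ (k * (n : ℤ)) * besselIC (k * (n : ℤ)) z =
      (1 / (n : ℂ)) * ∑ j ∈ Finset.range n,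
        Complex.exp ((z / 2) *
          (t⁻¹ * Complex.exp (2 * (π : ℂ) * Complex.I * (j : ℂ) / (n : ℂ))
            + t * Complex.exp (-(2 * (π : ℂ) * Complex.I * (j : ℂ)) / (n : ℂ)))) := by
  have hn0 : (n : ℂ) ≠ 0 := Nat.cast_ne_zero.2 (by omega)
  set s : ℕ → ℂ := fun j => t * Complex.exp (-(2 * (π : ℂ) * Complex.I * (j : ℂ)) / n)
    with hs'
  have hs : ∀ j : ℕ, s j ≠ 0 := fun j => mul_ne_zero ht (Complex.exp_ne_zero _)
  have hgen : ∀ j : ℕ, HasSum (fun k : ℤ => (s j) ^ k * besselIC k z)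
      (Complex.exp ((z / 2) *
        (t⁻¹ * Complex.exp (2 * (π : ℂ) * Complex.I * (j : ℂ) / (n : ℂ))
          + t * Complex.exp (-(2 * (π : ℂ) * Complex.I * (j : ℂ)) / (n : ℂ))))) := by
    intro j
    have hinv : (s j)⁻¹ = t⁻¹ * Complex.exp (2 * (π : ℂ) * Complex.I * (j : ℂ) / n) := by
      rw [hs', mul_inv, ← Complex.exp_neg]
      congr 1
      ring
    have := bessel_generating z (s j) (hs j)
    rwa [show z / 2 * (s j + (s j)⁻¹) = (z / 2) *
        (t⁻¹ * Complex.exp (2 * (π : ℂ) * Complex.I * (j : ℂ) / (n : ℂ))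
          + t * Complex.exp (-(2 * (π : ℂ) * Complex.I * (j : ℂ)) / (n : ℂ))) by
      rw [hinv]; ring] at this
  have hexpsum : ∀ j ∈ Finset.range n,
      Complex.exp ((z / 2) *
        (t⁻¹ * Complex.exp (2 * (π : ℂ) * Complex.I * (j : ℂ) / (n : ℂ))
          + t * Complex.exp (-(2 * (π : ℂ) * Complex.I * (j : ℂ)) / (n : ℂ))))
        = ∑' k : ℤ, (s j) ^ k * besselIC k z := fun j _ => (hgen j).tsum_eq.symm
  rw [Finset.sum_congr rfl hexpsum,
    ← Summable.tsum_finsetSum (fun j _ => (hgen j).summable)]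
  have hinner : ∀ k : ℤ, ∑ j ∈ Finset.range n, (s j) ^ k * besselIC k z
      = (if (n : ℤ) ∣ k then (n : ℂ) else 0) * (t ^ k * besselIC k z) := by
    intro k
    have h1 : ∀ j ∈ Finset.range n, (s j) ^ k * besselIC k z
        = Complex.exp ((k : ℂ) * (-(2 * (π : ℂ) * Complex.I * (j : ℂ)) / n))
            * (t ^ k * besselIC k z) := by
      intro j _
      rw [hs', mul_zpow, ← Complex.exp_int_mul]
      ring
    rw [Finset.sum_congr rfl h1, ← Finset.sum_mul, roots_filter n hn k]
  rw [tsum_congr hinner, ← tsum_mul_left]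
  have h2 : ∀ k : ℤ, 1 / (n : ℂ) *
      ((if (n : ℤ) ∣ k then (n : ℂ) else 0) * (t ^ k * besselIC k z))
      = (if (n : ℤ) ∣ k then t ^ k * besselIC k z else 0) := by
    intro k
    split_ifs with h
    · field_simp
    · simp
  rw [tsum_congr h2]
  set g : ℤ → ℂ := fun k => if (n : ℤ) ∣ k then t ^ k * besselIC k z else 0 with hg'
  have hinj : Function.Injective (fun m : ℤ => m * (n : ℤ)) := by
    intro a b h
    have hn1 : (n : ℤ) ≠ 0 := by omega
    exact mul_right_cancel₀ hn1 h
  have hsupp : Function.support g ⊆ Set.range (fun m : ℤ => m * (n : ℤ)) := by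
    intro k hk
    have hdvd : (n : ℤ) ∣ k := by
      by_contra h
      exact hk (by simp [hg', h])
    obtain ⟨c, rfl⟩ := hdvd
    exact ⟨c, by ring⟩
  have hmain := hinj.tsum_eq hsupp
  rw [← hmain]
  refine tsum_congr fun m => ?_
  simp only [hg']
  rw [if_pos ⟨m, mul_comm m (n : ℤ)⟩]
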